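/- Let L be a finite meet-semilattice, G a building set in L, X ∈ L \ {0̂} with X ∉ G, and let F_G(X) = max G_{≤X} be the set of factors of X. If S is a G-nested set with ⋁S ≤ X, then S ∪ F_G(X) is G-nested and ⋁(S ∪ F_G(X)) ≤ X. -/

import Mathlib

open scoped BigOperators

variable {L : Type*}

/-- The set of maximal elements of `G` below `X` (the `G`-factors of `X`). -/
def factorsSet [PartialOrder L] (G : Set L) (X : L) : Set L :=
  {g | g ∈ G ∧ g ≤ X ∧ ∀ h ∈ G, h ≤ X → g ≤ h → g = h}

/-- `G` is a building set in the meet-semilattice `L` with minimal element `⊥`: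
every element of `G` is nonminimal, and for every `X ≠ ⊥` there is a poset
isomorphism from the product of the lower intervals of the factors of `X`
to the lower interval of `X`, sending the `g`-th "unit vector" to `g`. -/
def IsBuilding (L : Type*) [PartialOrder L] [OrderBot L] (G : Set L) : Prop :=
  (∀ g ∈ G, g ≠ ⊥) ∧
  ∀ X : L, X ≠ ⊥ →
    ∃ φ : ((g : factorsSet G X) → Set.Icc (⊥ : L) g.1) ≃o Set.Icc (⊥ : L) X,
      ∀ (g : factorsSet G X) (u : (h : factorsSet G X) → Set.Icc (⊥ : L) h.1),
        (u g : L) = g.1 → (∀ h, h ≠ g → (u h : L) = (⊥ : L)) → ((φ u : L) = g.1)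

/-- A finite subset `S ⊆ G` is nested: every antichain in `S` of size at least 2
has a least upper bound in `L` which does not belong to `G`. -/
def IsNested [PartialOrder L] (G : Set L) (S : Finset L) : Prop :=
  ↑S ⊆ G ∧ ∀ A : Finset L, A ⊆ S → IsAntichain (· ≤ ·) (A : Set L) → 2 ≤ A.card →
    ∃ j, IsLUB (A : Set L) j ∧ j ∉ G

/-- The nested set complex, as the collection of its faces. -/
def nestedComplex [PartialOrder L] (G : Set L) : Set (Finset L) := {S | IsNested G S}

/-- The order complex of a poset: the collection of finite chains. -/
def chainComplex (V : Type*) [Preorder V] : Set (Finset V) :=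
  {S | IsChain (· ≤ ·) (S : Set V)}

/-- The order complex of `L \ {⊥}`, with vertex set inside `L`. -/
def orderComplexBot (L : Type*) [PartialOrder L] [OrderBot L] : Set (Finset L) :=
  {S | (S : Set L) ⊆ {x | x ≠ ⊥} ∧ IsChain (· ≤ ·) (S : Set L)}

/-- Geometric realization of an abstract simplicial complex (given by its set of
faces, as finsets of the vertex type `V`): convex combinations of vertices
supported on a face. -/
abbrev geomReal {V : Type*} (K : Set (Finset V)) : Type _ :=
  {f : V → ℝ // (∀ v, 0 ≤ f v) ∧ ∃ s ∈ K, (∀ v, f v ≠ 0 → v ∈ s) ∧ ∑ v ∈ s, f v = 1}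

/-- The subposet of the face poset of the nested set complex consisting of the
nonempty nested sets whose join is `≤ X`. -/
def NestedFiber [PartialOrder L] (G : Set L) (X : L) :=
  {S : Finset L // IsNested G S ∧ S.Nonempty ∧ ∃ j, IsLUB (S : Set L) j ∧ j ≤ X}

instance [PartialOrder L] (G : Set L) (X : L) : PartialOrder (NestedFiber G X) := by
  unfold NestedFiber; infer_instance

/-- The face poset of the nested set complex: nonempty nested sets ordered by inclusion. -/
def NestedFaces [PartialOrder L] (G : Set L) :=
  {S : Finset L // IsNested G S ∧ S.Nonempty}

instance [PartialOrder L] (G : Set L) : PartialOrder (NestedFaces G) := by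
  unfold NestedFaces; infer_instance

/-- The combinatorial blowup of a poset `M` at `X`: elements `Y` (marked `false`)
with `Y ≱ X`, and elements `Ŷ` (marked `true`) with `Y ≱ X` such that `Y ∨ X`
exists; ordered by `Y ≺ Z` iff `Y < Z`, `Ŷ ≺ Ẑ` iff `Y < Z`, `Y ≺ Ẑ` iff `Y ≤ Z`. -/
def Bl {M : Type*} [PartialOrder M] (X : M) :=
  {p : M × Bool // ¬ X ≤ p.1 ∧ (p.2 = true → ∃ j, IsLUB {p.1, X} j)}

noncomputable instance {M : Type*} [PartialOrder M] (X : M) : PartialOrder (Bl X) := by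
  unfold Bl; infer_instance

/-- The atoms of `L`, used as coordinates for the realization of nested set fans. -/
def Atoms (L : Type*) [PartialOrder L] [OrderBot L] := {a : L // IsAtom a}

open Classical in
/-- The characteristic vector of the set of atoms below `X`. -/
noncomputable def charVec [PartialOrder L] [OrderBot L] (X : L) : Atoms L → ℝ :=
  fun a => if a.1 ≤ X then 1 else 0

/-- The polyhedral cone spanned by the characteristic vectors of elements of `S`. -/
noncomputable def coneOf [PartialOrder L] [OrderBot L] (S : Finset L) : Set (Atoms L → ℝ) :=
  {y | ∃ c : L → ℝ, (∀ x, 0 ≤ c x) ∧ y = ∑ x ∈ S, c x • charVec x}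

/-- The fan associated to a building set: the cones spanned by the nested sets. -/
def fanOf [PartialOrder L] [OrderBot L] (G : Set L) : Set (Set (Atoms L → ℝ)) :=
  {C | ∃ S : Finset L, IsNested G S ∧ C = coneOf S}

/-- The cone generated by a ray `v` together with a cone `c`. -/
def rayJoin {E : Type*} [AddCommMonoid E] [Module ℝ E] (v : E) (c : Set E) : Set E :=
  {y | ∃ a : ℝ, ∃ x ∈ c, 0 ≤ a ∧ y = a • v + x}

/-- The stellar subdivision of a fan `F` at the cone `σ` with new ray `v`:
cones not containing `σ` are kept, and each cone `τ ⊇ σ` is replaced by the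
joins of `v` with the faces of `τ` not containing `σ`. -/
def stellarSub {E : Type*} [AddCommMonoid E] [Module ℝ E]
    (F : Set (Set E)) (σ : Set E) (v : E) : Set (Set E) :=
  {τ | τ ∈ F ∧ ¬ σ ⊆ τ} ∪
  {D | ∃ τ ∈ F, σ ⊆ τ ∧ ∃ c ∈ F, c ⊆ τ ∧ ¬ σ ⊆ c ∧ D = rayJoin v c}

section Aux

open Classical in
/-- Auxiliary: the `g₀`-th unit vector in the product of the lower intervals. -/
private noncomputable def unitVec [PartialOrder L] [OrderBot L] (G : Set L) (X : L)
    (g₀ : factorsSet G X) : (g : factorsSet G X) → Set.Icc (⊥ : L) g.1 := fun g =>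
  if _ : g = g₀ then ⟨g.1, Set.mem_Icc.mpr ⟨bot_le, le_rfl⟩⟩
  else ⟨⊥, Set.mem_Icc.mpr ⟨le_rfl, bot_le⟩⟩

private lemma unitVec_self [PartialOrder L] [OrderBot L] (G : Set L) (X : L)
    (g₀ : factorsSet G X) : ((unitVec G X g₀ g₀ : Set.Icc (⊥ : L) g₀.1) : L) = g₀.1 := by
  simp [unitVec]

private lemma unitVec_ne [PartialOrder L] [OrderBot L] (G : Set L) (X : L)
    (g₀ g : factorsSet G X) (h : g ≠ g₀) :
    ((unitVec G X g₀ g : Set.Icc (⊥ : L) g.1) : L) = ⊥ := by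
  simp [unitVec, h]

/-- Auxiliary: the inverse image under `φ` of an element `x ≤ X`. -/
private noncomputable def intoProd [PartialOrder L] [OrderBot L] (G : Set L) (X : L)
    (φ : ((g : factorsSet G X) → Set.Icc (⊥ : L) g.1) ≃o Set.Icc (⊥ : L) X)
    (x : L) (hx : x ≤ X) : (g : factorsSet G X) → Set.Icc (⊥ : L) g.1 :=
  φ.symm ⟨x, Set.mem_Icc.mpr ⟨bot_le, hx⟩⟩

private lemma phi_intoProd [PartialOrder L] [OrderBot L] (G : Set L) (X : L)
    (φ : ((g : factorsSet G X) → Set.Icc (⊥ : L) g.1) ≃o Set.Icc (⊥ : L) X)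
    (x : L) (hx : x ≤ X) :
    φ (intoProd G X φ x hx) = ⟨x, Set.mem_Icc.mpr ⟨bot_le, hx⟩⟩ :=
  OrderIso.apply_symm_apply φ _

private lemma coe_phi_intoProd [PartialOrder L] [OrderBot L] (G : Set L) (X : L)
    (φ : ((g : factorsSet G X) → Set.Icc (⊥ : L) g.1) ≃o Set.Icc (⊥ : L) X)
    (x : L) (hx : x ≤ X) :
    ((φ (intoProd G X φ x hx) : Set.Icc (⊥ : L) X) : L) = x := by
  rw [phi_intoProd]

private lemma intoProd_mono [PartialOrder L] [OrderBot L] (G : Set L) (X : L)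
    (φ : ((g : factorsSet G X) → Set.Icc (⊥ : L) g.1) ≃o Set.Icc (⊥ : L) X)
    (x : L) (hx : x ≤ X) (y : L) (hy : y ≤ X) (hxy : x ≤ y) :
    intoProd G X φ x hx ≤ intoProd G X φ y hy :=
  φ.symm.monotone (Subtype.mk_le_mk.mpr hxy)

private lemma intoProd_le_unitVec [PartialOrder L] [OrderBot L] (G : Set L) (X : L)
    (φ : ((g : factorsSet G X) → Set.Icc (⊥ : L) g.1) ≃o Set.Icc (⊥ : L) X)
    (x : L) (hx : x ≤ X) (g : factorsSet G X)
    (hu : ((φ (unitVec G X g) : Set.Icc (⊥ : L) X) : L) = g.1)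
    (hxg : x ≤ g.1) : intoProd G X φ x hx ≤ unitVec G X g := by
  have h1 : (⟨x, Set.mem_Icc.mpr ⟨bot_le, hx⟩⟩ : Set.Icc (⊥ : L) X) ≤ φ (unitVec G X g) := by
    rw [← Subtype.coe_le_coe, hu]
    exact hxg
  have h2 := φ.symm.monotone h1
  rwa [OrderIso.symm_apply_apply] at h2

/-- Every element of `G` below `X` lies below a maximal one. -/
private lemma exists_factor' {L : Type*} [PartialOrder L] [Fintype L]
    (G : Set L) (X h : L) (hh : h ∈ G) (hhX : h ≤ X) :
    ∃ g ∈ factorsSet G X, h ≤ g := by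
  classical
  obtain ⟨m, hm, hmax⟩ := Finset.exists_maximal
    (s := Finset.univ.filter fun y => y ∈ G ∧ h ≤ y ∧ y ≤ X) ⟨h, by simp [hh, hhX]⟩
  simp only [Finset.mem_filter, Finset.mem_univ, true_and] at hm
  refine ⟨m, ⟨hm.1, hm.2.2, ?_⟩, hm.2.1⟩
  intro k hk hkX hmk
  by_contra hne
  have hk' : k ∈ Finset.filter (fun y => y ∈ G ∧ h ≤ y ∧ y ≤ X) Finset.univ := by
    simp only [Finset.mem_filter, Finset.mem_univ, true_and]
    exact ⟨hk, hm.2.1.trans hmk, hkX⟩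
  exact hne (le_antisymm hmk (hmax hk' hmk))

end Aux

/-- For `X ∉ G` with factor set `F = F_G(X)`, if `S` is `G`-nested
with `⋁S ≤ X`, then `S ∪ F_G(X)` is `G`-nested with join `≤ X`. -/
theorem stmt5 (L : Type*) [SemilatticeInf L] [OrderBot L] [Fintype L] [DecidableEq L]
    (G : Set L) (hG : IsBuilding L G) (X : L) (hX : X ≠ ⊥) (hXG : X ∉ G)
    (F : Finset L) (hF : (F : Set L) = factorsSet G X)
    (S : Finset L) (hS : IsNested G S) (hle : ∃ j, IsLUB (S : Set L) j ∧ j ≤ X) :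
    IsNested G (S ∪ F) ∧ ∃ j, IsLUB ((S ∪ F : Finset L) : Set L) j ∧ j ≤ X := by
  classical
  obtain ⟨hGbot, hbuild⟩ := hG
  obtain ⟨φ, hφ⟩ := hbuild X hX
  obtain ⟨jS, hjSlub, hjSle⟩ := hle
  have hSX : ∀ a ∈ S, a ≤ X := fun a ha => (hjSlub.1 (Finset.mem_coe.mpr ha)).trans hjSle
  have hFmem : ∀ a ∈ F, a ∈ factorsSet G X := fun a ha =>
    (Set.ext_iff.mp hF a).mp (Finset.mem_coe.mpr ha)
  have hmemF : ∀ g : factorsSet G X, g.1 ∈ F := fun g =>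
    Finset.mem_coe.mp ((Set.ext_iff.mp hF g.1).mpr g.2)
  have hφe : ∀ g₀ : factorsSet G X, ((φ (unitVec G X g₀) : Set.Icc (⊥ : L) X) : L) = g₀.1 :=
    fun g₀ => hφ g₀ (unitVec G X g₀) (unitVec_self G X g₀)
      (fun h hh => unitVec_ne G X g₀ h hh)
  -- key nestedness claim
  have key : ∀ A : Finset L, A ⊆ S ∪ F → IsAntichain (· ≤ ·) (A : Set L) → 2 ≤ A.card →
      ∃ j, IsLUB (A : Set L) j ∧ j ∉ G := by
    intro A hAsub hanti hcard
    have hAG : ∀ a ∈ A, a ∈ G := by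
      intro a ha
      rcases Finset.mem_union.mp (hAsub ha) with h | h
      · exact hS.1 (Finset.mem_coe.mpr h)
      · exact (hFmem a h).1
    have hAX : ∀ a ∈ A, a ≤ X := by
      intro a ha
      rcases Finset.mem_union.mp (hAsub ha) with h | h
      · exact hSX a h
      · exact (hFmem a h).2.1
    -- joins of the fibers over each factor
    have hJ : ∀ g : factorsSet G X,
        ∃ j, IsLUB (↑(A.filter (fun a => a ≤ g.1)) : Set L) j ∧ j ≤ g.1 := by
      intro g
      by_cases hgA : g.1 ∈ A
      · refine ⟨g.1, ?_, le_rfl⟩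
        have hCeq : A.filter (fun a => a ≤ g.1) = {g.1} := by
          ext a
          simp only [Finset.mem_filter, Finset.mem_singleton]
          constructor
          · rintro ⟨haA, hag⟩
            by_contra hne
            exact hanti (Finset.mem_coe.mpr haA) (Finset.mem_coe.mpr hgA) hne hag
          · rintro rfl
            exact ⟨hgA, le_rfl⟩
        rw [hCeq, Finset.coe_singleton]
        exact isLUB_singleton
      · rcases Nat.lt_or_ge (A.filter (fun a => a ≤ g.1)).card 2 with h2 | h2
        · rcases Finset.eq_empty_or_nonempty (A.filter (fun a => a ≤ g.1)) with h0 | ⟨a, ha⟩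
          · refine ⟨⊥, ?_, bot_le⟩
            rw [h0, Finset.coe_empty]
            exact isLUB_empty
          · have h1 : A.filter (fun a => a ≤ g.1) = {a} := by
              apply Finset.eq_singleton_iff_unique_mem.mpr
              refine ⟨ha, fun b hb => ?_⟩
              by_contra hne
              have : 1 < (A.filter (fun a => a ≤ g.1)).card :=
                Finset.one_lt_card.mpr ⟨b, hb, a, ha, hne⟩
              omega
            refine ⟨a, ?_, (Finset.mem_filter.mp ha).2⟩
            rw [h1, Finset.coe_singleton]
            exact isLUB_singleton
        · have hCS : A.filter (fun a => a ≤ g.1) ⊆ S := by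
            intro a ha
            obtain ⟨haA, hag⟩ := Finset.mem_filter.mp ha
            rcases Finset.mem_union.mp (hAsub haA) with h | h
            · exact h
            · exfalso
              have heq := (hFmem a h).2.2 g.1 g.2.1 g.2.2.1 hag
              exact hgA (heq ▸ haA)
          obtain ⟨j, hj, hjG⟩ := hS.2 _ hCS
            (hanti.subset (Finset.coe_subset.mpr (Finset.filter_subset _ _))) h2
          refine ⟨j, hj, hj.2 ?_⟩
          intro a ha
          exact (Finset.mem_filter.mp (Finset.mem_coe.mp ha)).2
    choose jg hjglub hjgle using hJ
    have hjgX : ∀ g : factorsSet G X, jg g ≤ X := fun g => (hjgle g).trans g.2.2.1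
    set w : (g : factorsSet G X) → Set.Icc (⊥ : L) g.1 :=
      fun g => intoProd G X φ (jg g) (hjgX g) g with hw
    set j : L := ((φ w : Set.Icc (⊥ : L) X) : L) with hjdef
    have hjX : j ≤ X := (φ w).2.2
    -- each `intoProd a` is below `w`
    have hιw : ∀ a (ha : a ∈ A), intoProd G X φ a (hAX a ha) ≤ w := by
      intro a ha
      obtain ⟨g₁, hg₁mem, hag₁⟩ := exists_factor' G X a (hAG a ha) (hAX a ha)
      intro h
      by_cases hh : h = (⟨g₁, hg₁mem⟩ : factorsSet G X)
      · subst hh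
        have h1 : a ≤ jg ⟨g₁, hg₁mem⟩ := (hjglub _).1 (Finset.mem_coe.mpr
            (Finset.mem_filter.mpr ⟨ha, hag₁⟩))
        exact intoProd_mono G X φ a (hAX a ha) _ (hjgX _) h1 _
      · have h2 := intoProd_le_unitVec G X φ a (hAX a ha) ⟨g₁, hg₁mem⟩ (hφe _) hag₁ h
        rw [← Subtype.coe_le_coe]
        calc ((intoProd G X φ a (hAX a ha) h : Set.Icc (⊥ : L) h.1) : L)
            ≤ ((unitVec G X ⟨g₁, hg₁mem⟩ h : Set.Icc (⊥ : L) h.1) : L) := h2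
          _ = ⊥ := unitVec_ne G X _ h hh
          _ ≤ _ := bot_le
    have hub : ∀ a ∈ (A : Set L), a ≤ j := by
      intro a ha
      have h1 := φ.monotone (hιw a (Finset.mem_coe.mp ha))
      have h2 : ((φ (intoProd G X φ a (hAX a (Finset.mem_coe.mp ha))) :
          Set.Icc (⊥ : L) X) : L) ≤ j := h1
      rwa [coe_phi_intoProd] at h2
    have hlub : IsLUB (A : Set L) j := by
      refine ⟨hub, ?_⟩
      intro b hb
      have hb'X : b ⊓ X ≤ X := inf_le_right
      have hwz : w ≤ intoProd G X φ (b ⊓ X) hb'X := by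
        intro g
        have hjgb : jg g ≤ b ⊓ X := by
          refine le_inf ((hjglub g).2 ?_) (hjgX g)
          intro a ha
          exact hb (Finset.mem_coe.mpr (Finset.mem_filter.mp (Finset.mem_coe.mp ha)).1)
        exact intoProd_mono G X φ (jg g) (hjgX g) (b ⊓ X) hb'X hjgb g
      have h1 := φ.monotone hwz
      have h2 : j ≤ ((φ (intoProd G X φ (b ⊓ X) hb'X) : Set.Icc (⊥ : L) X) : L) := h1
      rw [coe_phi_intoProd] at h2
      exact h2.trans inf_le_left
    refine ⟨j, hlub, ?_⟩
    intro hjG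
    obtain ⟨a₀, ha₀, b₀, hb₀, hab⟩ := Finset.one_lt_card.mp hcard
    have hjbot : j ≠ ⊥ := by
      intro h
      have h1 : a₀ ≤ (⊥ : L) := h ▸ hub a₀ (Finset.mem_coe.mpr ha₀)
      exact hGbot a₀ (hAG a₀ ha₀) (le_bot_iff.mp h1)
    obtain ⟨g₀, hg₀mem, hjg₀⟩ := exists_factor' G X j hjG hjX
    have hwι : w = intoProd G X φ j hjX := by
      have h1 : φ w = ⟨j, Set.mem_Icc.mpr ⟨bot_le, hjX⟩⟩ := Subtype.ext rfl
      calc w = φ.symm (φ w) := (OrderIso.symm_apply_apply φ w).symm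
        _ = intoProd G X φ j hjX := by rw [h1]; rfl
    have hwe : w ≤ unitVec G X ⟨g₀, hg₀mem⟩ := by
      rw [hwι]
      exact intoProd_le_unitVec G X φ j hjX ⟨g₀, hg₀mem⟩ (hφe _) hjg₀
    have hag₀ : ∀ a ∈ A, a ≤ g₀ := by
      intro a ha
      have h1 : intoProd G X φ a (hAX a ha) ≤ unitVec G X ⟨g₀, hg₀mem⟩ :=
        le_trans (hιw a ha) hwe
      have h2 := φ.monotone h1
      have h3 : ((φ (intoProd G X φ a (hAX a ha)) : Set.Icc (⊥ : L) X) : L) ≤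
          ((φ (unitVec G X ⟨g₀, hg₀mem⟩) : Set.Icc (⊥ : L) X) : L) := h2
      rwa [coe_phi_intoProd, hφe] at h3
    by_cases hg₀A : g₀ ∈ A
    · rcases eq_or_ne a₀ g₀ with h | h
      · exact hanti (Finset.mem_coe.mpr hb₀) (Finset.mem_coe.mpr hg₀A)
          (h ▸ hab.symm) (hag₀ b₀ hb₀)
      · exact hanti (Finset.mem_coe.mpr ha₀) (Finset.mem_coe.mpr hg₀A) h (hag₀ a₀ ha₀)
    · have hAS : A ⊆ S := by
        intro a ha
        rcases Finset.mem_union.mp (hAsub ha) with h | h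
        · exact h
        · exfalso
          have heq := (hFmem a h).2.2 g₀ hg₀mem.1 hg₀mem.2.1 (hag₀ a ha)
          exact hg₀A (heq ▸ ha)
      obtain ⟨j', hj', hj'G⟩ := hS.2 A hAS hanti hcard
      exact hj'G (hlub.unique hj' ▸ hjG)
  constructor
  · constructor
    · intro a ha
      rcases Finset.mem_union.mp (Finset.mem_coe.mp ha) with h | h
      · exact hS.1 (Finset.mem_coe.mpr h)
      · exact (hFmem a h).1
    · exact key
  · refine ⟨X, ⟨?_, ?_⟩, le_rfl⟩
    · intro a ha
      rcases Finset.mem_union.mp (Finset.mem_coe.mp ha) with h | h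
      · exact hSX a h
      · exact (hFmem a h).2.1
    · intro b hb
      have hb'X : b ⊓ X ≤ X := inf_le_right
      have hz : ∀ g : factorsSet G X,
          ((intoProd G X φ (b ⊓ X) hb'X g : Set.Icc (⊥ : L) g.1) : L) = g.1 := by
        intro g
        have hgb : g.1 ≤ b ⊓ X :=
          le_inf (hb (Finset.mem_coe.mpr (Finset.mem_union.mpr (Or.inr (hmemF g)))))
            g.2.2.1
        have h1 : unitVec G X g ≤ intoProd G X φ (b ⊓ X) hb'X := by
          have h2 : φ (unitVec G X g) ≤ ⟨b ⊓ X, Set.mem_Icc.mpr ⟨bot_le, hb'X⟩⟩ := by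
            rw [← Subtype.coe_le_coe, hφe g]
            exact hgb
          have h3 := φ.symm.monotone h2
          rwa [OrderIso.symm_apply_apply] at h3
        refine le_antisymm (intoProd G X φ (b ⊓ X) hb'X g).2.2 ?_
        calc g.1 = ((unitVec G X g g : Set.Icc (⊥ : L) g.1) : L) := (unitVec_self G X g).symm
          _ ≤ _ := h1 g
      have hXz : intoProd G X φ X le_rfl ≤ intoProd G X φ (b ⊓ X) hb'X := by
        intro g
        rw [← Subtype.coe_le_coe, hz g]
        exact (intoProd G X φ X le_rfl g).2.2
      have h1 := φ.monotone hXz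
      have h2 : ((φ (intoProd G X φ X le_rfl) : Set.Icc (⊥ : L) X) : L) ≤
          ((φ (intoProd G X φ (b ⊓ X) hb'X) : Set.Icc (⊥ : L) X) : L) := h1
      rw [coe_phi_intoProd, coe_phi_intoProd] at h2
      exact h2.trans inf_le_left
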